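/- arXiv:2211.03301 — 2 statements merged into one kernel-verified Lean document; each statement's English description precedes it below -/
import Mathlib

section
/- For β > α > 0 and vectors a_1, ..., a_N (N ≥ 2) in an inner product space: ∑_{i=1}^N ‖a_i‖² ≥ (1/(αN + (N−2)β)) · [ β·∑_{1≤i<j≤N} ‖a_i + a_j‖² + α·∑_{1≤i<j≤N} ‖a_i − a_j‖² + ((α−β)/(N−1)²)·(∑_{1≤i<j≤N} ‖a_i + a_j‖)² ]. -/
set_option maxHeartbeats 1000000

open Finset RCLike
open scoped InnerProductSpace

lemma pair_sum_aux {M : Type*} [AddCommMonoid M] {N : ℕ} (f : Fin N → Fin N → M) :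
    (∑ i, ∑ j ∈ univ.filter (fun j => i < j), f i j) +
    ((∑ i, ∑ j ∈ univ.filter (fun j => i < j), f j i) +
    ∑ i, f i i) = ∑ i, ∑ j, f i j := by
  have swap : (∑ i, ∑ j ∈ univ.filter (fun j => i < j), f j i)
      = ∑ i : Fin N, ∑ j ∈ univ.filter (fun j => j < i), f i j := by
    apply Finset.sum_comm'
    intro x y
    simp [and_comm]
  rw [swap, ← Finset.sum_add_distrib, ← Finset.sum_add_distrib]
  apply Finset.sum_congr rfl
  intro i _
  have h1 : (univ.filter (fun j => i < j)) ∪ ((univ.filter (fun j => j < i)) ∪ {i}) = (univ : Finset (Fin N)) := by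
    ext j
    simp only [mem_union, mem_filter, mem_univ, true_and, mem_singleton]
    constructor
    · intro _; trivial
    · intro _
      rcases lt_trichotomy i j with h | h | h
      · exact Or.inl h
      · exact Or.inr (Or.inr h.symm)
      · exact Or.inr (Or.inl h)
  have d1 : Disjoint (univ.filter (fun j => j < i)) ({i} : Finset (Fin N)) := by
    simp [Finset.disjoint_singleton_right]
  have d2 : Disjoint (univ.filter (fun j => i < j)) ((univ.filter (fun j => j < i)) ∪ {i}) := by
    simp only [Finset.disjoint_union_right, Finset.disjoint_singleton_right]
    constructor
    · rw [Finset.disjoint_filter]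
      intro x _ hx
      exact fun h => absurd (lt_trans hx h) (lt_irrefl i)
    · simp
  conv_rhs => rw [← h1]
  rw [Finset.sum_union d2, Finset.sum_union d1, Finset.sum_singleton]

theorem weighted_norm_ineq_Z {𝕜 V : Type*} [RCLike 𝕜] [NormedAddCommGroup V]
    [InnerProductSpace 𝕜 V] (N : ℕ) (hN : 2 ≤ N) (a : Fin N → V)
    (α β : ℝ) (hα : 0 < α) (hαβ : α < β) :
    ∑ i, ‖a i‖ ^ 2 ≥
      (1 / (α * N + ((N : ℝ) - 2) * β)) *
        (β * (∑ i : Fin N, ∑ j ∈ univ.filter (fun j => i < j), ‖a i + a j‖ ^ 2) +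
         α * (∑ i : Fin N, ∑ j ∈ univ.filter (fun j => i < j), ‖a i - a j‖ ^ 2) +
         ((α - β) / ((N : ℝ) - 1) ^ 2) *
          (∑ i : Fin N, ∑ j ∈ univ.filter (fun j => i < j), ‖a i + a j‖) ^ 2) := by
  obtain ⟨n, rfl⟩ : ∃ n, N = n + 2 := ⟨N - 2, by omega⟩
  have hβ : 0 < β := hα.trans hαβ
  set S := ∑ i, ‖a i‖ ^ 2 with hS
  set v := ∑ i, a i with hv
  set R := ∑ i : Fin (n+2), ∑ j ∈ univ.filter (fun j => i < j), re (⟪a i, a j⟫_𝕜) with hR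
  set A := ∑ i : Fin (n+2), ∑ j ∈ univ.filter (fun j => i < j), ‖a i + a j‖ ^ 2 with hAdef
  set B := ∑ i : Fin (n+2), ∑ j ∈ univ.filter (fun j => i < j), ‖a i - a j‖ ^ 2 with hBdef
  set T := ∑ i : Fin (n+2), ∑ j ∈ univ.filter (fun j => i < j), ‖a i + a j‖ with hTdef
  -- fact: ‖v‖² = S + 2R
  have hQ : ‖v‖ ^ 2 = S + 2 * R := by
    have key := pair_sum_aux (fun i j => re (⟪a i, a j⟫_𝕜))
    have h2 : (∑ i : Fin (n+2), ∑ j ∈ univ.filter (fun j => i < j), re (⟪a j, a i⟫_𝕜)) = R := by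
      refine Finset.sum_congr rfl fun i _ => Finset.sum_congr rfl fun j _ => inner_re_symm _ _
    have h3 : (∑ i : Fin (n+2), re (⟪a i, a i⟫_𝕜)) = S := by
      refine Finset.sum_congr rfl fun i _ => inner_self_eq_norm_sq _
    have h4 : (∑ i : Fin (n+2), ∑ j, re (⟪a i, a j⟫_𝕜)) = ‖v‖ ^ 2 := by
      rw [← inner_self_eq_norm_sq (𝕜 := 𝕜) v, hv]
      simp only [sum_inner, inner_sum, map_sum]
      exact Finset.sum_comm
    simp only [h2, h3, h4] at key
    linarith [key]
  -- fact: pair sum of norms squared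
  have hP : (∑ i : Fin (n+2), ∑ j ∈ univ.filter (fun j => i < j), (‖a i‖ ^ 2 + ‖a j‖ ^ 2))
      = ((n : ℝ) + 1) * S := by
    have key := pair_sum_aux (fun i j => ‖a i‖ ^ 2 + ‖a j‖ ^ 2)
    have h2 : (∑ i : Fin (n+2), ∑ j ∈ univ.filter (fun j => i < j), (‖a j‖ ^ 2 + ‖a i‖ ^ 2))
        = ∑ i : Fin (n+2), ∑ j ∈ univ.filter (fun j => i < j), (‖a i‖ ^ 2 + ‖a j‖ ^ 2) := by
      refine Finset.sum_congr rfl fun i _ => Finset.sum_congr rfl fun j _ => add_comm _ _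
    have h3 : (∑ i : Fin (n+2), (‖a i‖ ^ 2 + ‖a i‖ ^ 2)) = S + S := by
      rw [Finset.sum_add_distrib]
    have h4 : (∑ i : Fin (n+2), ∑ j : Fin (n+2), (‖a i‖ ^ 2 + ‖a j‖ ^ 2))
        = ((n : ℝ) + 2) * S + ((n : ℝ) + 2) * S := by
      simp only [Finset.sum_add_distrib, Finset.sum_const, card_univ, Fintype.card_fin,
        nsmul_eq_mul, ← Finset.sum_mul, ← Finset.mul_sum]
      push_cast
      ring
    simp only [h2, h3, h4] at key
    linarith [key]
  have hA' : A = ((n : ℝ) + 1) * S + 2 * R := by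
    rw [← hP, hAdef, hR, Finset.mul_sum, ← Finset.sum_add_distrib]
    refine Finset.sum_congr rfl fun i _ => ?_
    rw [Finset.mul_sum, ← Finset.sum_add_distrib]
    refine Finset.sum_congr rfl fun j _ => ?_
    rw [norm_add_sq (𝕜 := 𝕜)]
    ring
  have hB' : B = ((n : ℝ) + 1) * S - 2 * R := by
    have : B + 2 * R = ((n : ℝ) + 1) * S := by
      rw [← hP, hBdef, hR, Finset.mul_sum, ← Finset.sum_add_distrib]
      refine Finset.sum_congr rfl fun i _ => ?_
      rw [Finset.mul_sum, ← Finset.sum_add_distrib]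
      refine Finset.sum_congr rfl fun j _ => ?_
      rw [norm_sub_sq (𝕜 := 𝕜)]
      ring
    linarith [this]
  -- vector sum over pairs
  set W := ∑ i : Fin (n+2), ∑ j ∈ univ.filter (fun j => i < j), (a i + a j) with hWdef
  have hW : W = ((n : 𝕜) + 1) • v := by
    have key := pair_sum_aux (fun i j => a i + a j)
    have h2 : (∑ i : Fin (n+2), ∑ j ∈ univ.filter (fun j => i < j), (a j + a i)) = W := by
      refine Finset.sum_congr rfl fun i _ => Finset.sum_congr rfl fun j _ => add_comm _ _
    have h3 : (∑ i : Fin (n+2), (a i + a i)) = v + v := by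
      rw [Finset.sum_add_distrib]
    have h4 : (∑ i : Fin (n+2), ∑ j : Fin (n+2), (a i + a j))
        = ((n : 𝕜) + 2) • v + ((n : 𝕜) + 2) • v := by
      have hns : ((n + 2) : ℕ) • v = ((n : 𝕜) + 2) • v := by
        rw [← Nat.cast_smul_eq_nsmul 𝕜]
        norm_num
      simp only [Finset.sum_add_distrib, Finset.sum_const, card_univ, Fintype.card_fin,
        ← Finset.smul_sum, ← hv, hns]
    simp only [h2, h3, h4, ← hWdef] at key
    have h5 : (2 : 𝕜) • W = (2 : 𝕜) • (((n : 𝕜) + 1) • v) := by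
      have h6 : W + W = ((n : 𝕜) + 2) • v + ((n : 𝕜) + 2) • v - (v + v) := by
        rw [eq_sub_iff_add_eq, ← key]
        abel
      rw [two_smul, h6]
      module
    exact smul_right_injective V two_ne_zero h5
  have hWnorm : ‖W‖ = ((n : ℝ) + 1) * ‖v‖ := by
    have hc : ((n : 𝕜) + 1) = ((n + 1 : ℕ) : 𝕜) := by push_cast; ring
    rw [hW, hc, norm_smul, RCLike.norm_natCast]
    push_cast
    ring
  have hTW : ((n : ℝ) + 1) * ‖v‖ ≤ T := by
    rw [← hWnorm, hWdef, hTdef]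
    calc ‖∑ i : Fin (n+2), ∑ j ∈ univ.filter (fun j => i < j), (a i + a j)‖
        ≤ ∑ i : Fin (n+2), ‖∑ j ∈ univ.filter (fun j => i < j), (a i + a j)‖ :=
          norm_sum_le _ _
      _ ≤ ∑ i : Fin (n+2), ∑ j ∈ univ.filter (fun j => i < j), ‖a i + a j‖ :=
          Finset.sum_le_sum fun i _ => norm_sum_le _ _
  have hT2 : (((n : ℝ) + 1) * ‖v‖) ^ 2 ≤ T ^ 2 := by
    apply pow_le_pow_left₀ (by positivity) hTW
  -- the coefficient inequality
  have hc : ((α - β) / ((n : ℝ) + 1) ^ 2) * T ^ 2 ≤ (α - β) * ‖v‖ ^ 2 := by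
    have h1 : (α - β) / ((n : ℝ) + 1) ^ 2 ≤ 0 := by
      apply div_nonpos_of_nonpos_of_nonneg (by linarith) (by positivity)
    calc ((α - β) / ((n : ℝ) + 1) ^ 2) * T ^ 2
        ≤ ((α - β) / ((n : ℝ) + 1) ^ 2) * ((((n : ℝ) + 1) * ‖v‖) ^ 2) :=
          mul_le_mul_of_nonpos_left hT2 h1
      _ = (α - β) * ‖v‖ ^ 2 := by
          have : ((n : ℝ) + 1) ≠ 0 := by positivity
          field_simp
  have hD : (0 : ℝ) < α * ((n : ℝ) + 2) + (n : ℝ) * β := by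
    have h1 : (0 : ℝ) ≤ (n : ℝ) * β := by positivity
    nlinarith
  have hmain : β * A + α * B + ((α - β) / ((n : ℝ) + 1) ^ 2) * T ^ 2
      ≤ (α * ((n : ℝ) + 2) + (n : ℝ) * β) * S := by
    calc β * A + α * B + ((α - β) / ((n : ℝ) + 1) ^ 2) * T ^ 2
        ≤ β * A + α * B + (α - β) * ‖v‖ ^ 2 := by linarith [hc]
      _ = (α * ((n : ℝ) + 2) + (n : ℝ) * β) * S := by
          rw [hA', hB', hQ]; ring
  rw [ge_iff_le]
  have hcast1 : ((↑(n + 2) : ℝ)) = (n : ℝ) + 2 := by push_cast; ring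
  rw [hcast1]
  have hcast2 : ((n : ℝ) + 2 - 2) = (n : ℝ) := by ring
  have hcast3 : ((n : ℝ) + 2 - 1) = (n : ℝ) + 1 := by ring
  rw [hcast2, hcast3]
  have hDinv : (0 : ℝ) < 1 / (α * ((n : ℝ) + 2) + (n : ℝ) * β) := by positivity
  have hfinal := mul_le_mul_of_nonneg_left hmain hDinv.le
  have hcancel : (1 / (α * ((n : ℝ) + 2) + (n : ℝ) * β)) *
      ((α * ((n : ℝ) + 2) + (n : ℝ) * β) * S) = S := by
    field_simp
  linarith [hfinal, hcancel]
end

section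
/- For N ≥ 2 Hermitian observables A_1, ..., A_N, a density matrix ρ, and α, β > 0: ∑_{i=1}^N Δ²_ρ(A_i) ≥ (1/(αN + (N−2)β)) · [ (2β/(N(N−1)))·(∑_{1≤i<j≤N} Δ_ρ(A_i + A_j))² + α·∑_{1≤i<j≤N} Δ²_ρ(A_i − A_j) + (α−β)·Δ²_ρ(∑_{i=1}^N A_i) ] (bound X of Theorem 2). -/
open Finset ComplexOrder

/-- Variance of an observable `M` in the state `ρ`. -/
noncomputable def qvar {d : ℕ} (ρ M : Matrix (Fin d) (Fin d) ℂ) : ℝ :=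
  ((ρ * M ^ 2).trace - (ρ * M).trace ^ 2).re

/-- Standard deviation of an observable `M` in the state `ρ`. -/
noncomputable def qdev {d : ℕ} (ρ M : Matrix (Fin d) (Fin d) ℂ) : ℝ :=
  Real.sqrt (qvar ρ M)

open scoped Matrix

section Aux

variable {d : ℕ} (ρ : Matrix (Fin d) (Fin d) ℂ)

/-- Complex variance. -/
noncomputable def cvar (M : Matrix (Fin d) (Fin d) ℂ) : ℂ :=
  (ρ * M ^ 2).trace - (ρ * M).trace ^ 2

/-- Complex covariance (symmetrized). -/
noncomputable def ccov (M N : Matrix (Fin d) (Fin d) ℂ) : ℂ :=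
  (ρ * (M * N)).trace + (ρ * (N * M)).trace - 2 * (ρ * M).trace * (ρ * N).trace

lemma qvar_eq_re (M : Matrix (Fin d) (Fin d) ℂ) : qvar ρ M = (cvar ρ M).re := rfl

lemma trace_psd_nonneg {M : Matrix (Fin d) (Fin d) ℂ} (h : M.PosSemidef) :
    0 ≤ M.trace := by
  apply Finset.sum_nonneg
  intro i _
  exact h.diag_nonneg

lemma trace_mul_herm_real {ρ M : Matrix (Fin d) (Fin d) ℂ} (hρ : ρ.IsHermitian)
    (hM : M.IsHermitian) : star ((ρ * M).trace) = (ρ * M).trace := by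
  rw [← Matrix.trace_conjTranspose, Matrix.conjTranspose_mul, hρ.eq, hM.eq,
    Matrix.trace_mul_comm]

lemma qvar_nonneg {ρ M : Matrix (Fin d) (Fin d) ℂ} (hρ : ρ.PosSemidef)
    (hρ1 : ρ.trace = 1) (hM : M.IsHermitian) : 0 ≤ qvar ρ M := by
  set t := (ρ * M).trace with ht
  have htr : star t = t := trace_mul_herm_real hρ.1 hM
  set C := M - t • (1 : Matrix (Fin d) (Fin d) ℂ) with hC
  have hCH : Cᴴ = C := by
    rw [hC, Matrix.conjTranspose_sub, hM.eq, Matrix.conjTranspose_smul,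
      Matrix.conjTranspose_one, htr]
  have hps := Matrix.PosSemidef.mul_mul_conjTranspose_same hρ C
  rw [hCH] at hps
  have h0 : (0:ℂ) ≤ (C * ρ * C).trace := trace_psd_nonneg hps
  have htrace : (C * ρ * C).trace = (ρ * M ^ 2).trace - t ^ 2 := by
    have h1 : (C * ρ * C).trace = (ρ * (C * C)).trace := by
      rw [Matrix.trace_mul_comm, ← mul_assoc, Matrix.trace_mul_comm]
    have h2 : C * C = M * M - (2 * t) • M + (t * t) • (1 : Matrix (Fin d) (Fin d) ℂ) := by
      rw [hC]
      simp only [sub_mul, mul_sub, Matrix.smul_mul, Matrix.mul_smul, one_mul, mul_one,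
        smul_smul, two_mul, add_smul]
      abel
    rw [h1, h2]
    simp only [mul_sub, mul_add, Matrix.trace_sub, Matrix.trace_add, Matrix.mul_smul,
      Matrix.trace_smul, Matrix.mul_one, hρ1, smul_eq_mul, mul_one, ← ht, sq, ← mul_assoc]
    ring
  rw [htrace] at h0
  exact (Complex.le_def.mp h0).1

lemma cvar_add (M N : Matrix (Fin d) (Fin d) ℂ) :
    cvar ρ (M + N) = cvar ρ M + cvar ρ N + ccov ρ M N := by
  unfold cvar ccov
  have h2 : (M + N) ^ 2 = M ^ 2 + M * N + N * M + N ^ 2 := by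
    simp only [sq]; noncomm_ring
  rw [h2]
  simp only [mul_add, Matrix.trace_add]
  ring

lemma cvar_sub (M N : Matrix (Fin d) (Fin d) ℂ) :
    cvar ρ (M - N) = cvar ρ M + cvar ρ N - ccov ρ M N := by
  unfold cvar ccov
  have h2 : (M - N) ^ 2 = M ^ 2 - (M * N) - (N * M) + N ^ 2 := by
    simp only [sq]; noncomm_ring
  rw [h2]
  simp only [mul_add, mul_sub, Matrix.trace_add, Matrix.trace_sub]
  ring

/-- Pairing lemma: a full double sum splits into diagonal plus symmetrized
upper-triangular part. -/
lemma double_sum_split {n : ℕ} {G : Type*} [AddCommMonoid G] (f : Fin n → Fin n → G) :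
    ∑ i, ∑ j, f i j = ∑ i, f i i + ∑ i, ∑ j ∈ Ioi i, (f i j + f j i) := by
  have key := Finset.sum_sum_Ioi_add_eq_sum_sum_off_diag (fun i j => f j i)
  -- key : ∑ i, ∑ j ∈ Ioi i, (f i j + f j i) = ∑ i, ∑ j ∈ {i}ᶜ, f i j
  rw [key]
  rw [← Finset.sum_add_distrib]
  refine Finset.sum_congr rfl fun i _ => ?_
  rw [add_comm, ← Finset.sum_compl_add_sum {i} (f i)]
  simp only [Finset.sum_singleton]

lemma cvar_sum {n : ℕ} (A : Fin n → Matrix (Fin d) (Fin d) ℂ) :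
    cvar ρ (∑ i, A i) = ∑ i, cvar ρ (A i) + ∑ i, ∑ j ∈ Ioi i, ccov ρ (A i) (A j) := by
  have h2 : (∑ i, A i) ^ 2 = ∑ i, ∑ j, A i * A j := by
    rw [sq, Finset.sum_mul_sum]
  have ht2 : (ρ * ∑ i, ∑ j, A i * A j).trace = ∑ i, ∑ j, (ρ * (A i * A j)).trace := by
    simp [Finset.mul_sum, Matrix.trace_sum]
  have ht : ((ρ * ∑ i, A i).trace) ^ 2
      = ∑ i, ∑ j, (ρ * A i).trace * (ρ * A j).trace := by
    rw [Finset.mul_sum]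
    simp only [Matrix.trace_sum]
    rw [sq, Finset.sum_mul_sum]
  unfold cvar
  rw [h2, ht2, ht, ← Finset.sum_sub_distrib]
  simp only [← Finset.sum_sub_distrib]
  rw [double_sum_split (fun i j => (ρ * (A i * A j)).trace - (ρ * A i).trace * (ρ * A j).trace)]
  unfold ccov
  congr 1
  · refine Finset.sum_congr rfl fun i _ => ?_
    rw [sq, sq]
  · refine Finset.sum_congr rfl fun i _ => Finset.sum_congr rfl fun j _ => ?_
    ring

end Aux

theorem theorem2_X {d N : ℕ} (hN : 2 ≤ N) (ρ : Matrix (Fin d) (Fin d) ℂ)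
    (hρ : ρ.PosSemidef) (hρ1 : ρ.trace = 1)
    (A : Fin N → Matrix (Fin d) (Fin d) ℂ) (hA : ∀ i, (A i).IsHermitian)
    (α β : ℝ) (hα : 0 < α) (hβ : 0 < β) :
    ∑ i, qvar ρ (A i) ≥
      (1 / (α * N + ((N : ℝ) - 2) * β)) *
        ((2 * β / ((N : ℝ) * ((N : ℝ) - 1))) *
          (∑ i : Fin N, ∑ j ∈ univ.filter (fun j => i < j), qdev ρ (A i + A j)) ^ 2 +
         α * (∑ i : Fin N, ∑ j ∈ univ.filter (fun j => i < j), qvar ρ (A i - A j)) +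
         (α - β) * qvar ρ (∑ i, A i)) := by
  classical
  have hfilt : ∀ i : Fin N, univ.filter (fun j => i < j) = Ioi i := by
    intro i; ext j; simp
  simp only [hfilt]
  -- abbreviations
  set S := ∑ i, qvar ρ (A i) with hS
  set V := qvar ρ (∑ i, A i) with hV
  set D := ∑ i : Fin N, ∑ j ∈ Ioi i, qvar ρ (A i - A j) with hD
  set P := ∑ i : Fin N, ∑ j ∈ Ioi i, qvar ρ (A i + A j) with hP
  set T := ∑ i : Fin N, ∑ j ∈ Ioi i, qdev ρ (A i + A j) with hT
  have hNR : (2:ℝ) ≤ (N:ℝ) := by exact_mod_cast hN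
  -- the ccov double sum
  have hcovsum : ∑ i : Fin N, ∑ j ∈ Ioi i, ccov ρ (A i) (A j)
      = cvar ρ (∑ i, A i) - ∑ i, cvar ρ (A i) := by
    rw [cvar_sum]; ring
  -- sum over pairs of (f i + f j) = (N-1) * ∑ f  (complex version)
  have hsym : ∀ f : Fin N → ℂ, ∑ i : Fin N, ∑ j ∈ Ioi i, (f i + f j)
      = (N - 1 : ℂ) * ∑ i, f i := by
    intro f
    have h1 := double_sum_split (fun i j : Fin N => f i)
    -- h1 : ∑ i, ∑ j, f i = ∑ i, f i + ∑ i, ∑ j ∈ Ioi i, (f i + f j)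
    have h2 : ∑ i : Fin N, ∑ _j : Fin N, f i = (N : ℂ) * ∑ i, f i := by
      simp only [Finset.sum_const, Finset.card_univ, Fintype.card_fin, nsmul_eq_mul]
      rw [Finset.mul_sum]
    rw [h2] at h1
    have : ∑ i : Fin N, ∑ j ∈ Ioi i, (f i + f j)
        = (N : ℂ) * ∑ i, f i - ∑ i, f i := by linear_combination -h1
    rw [this]; ring
  -- identity for D (complex)
  have hDC : ∑ i : Fin N, ∑ j ∈ Ioi i, cvar ρ (A i - A j)
      = (N : ℂ) * ∑ i, cvar ρ (A i) - cvar ρ (∑ i, A i) := by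
    have : ∀ i j : Fin N, cvar ρ (A i - A j)
        = cvar ρ (A i) + cvar ρ (A j) - ccov ρ (A i) (A j) := fun i j => cvar_sub ρ _ _
    simp only [this]
    rw [Finset.sum_congr rfl (fun i _ => Finset.sum_sub_distrib _ _), Finset.sum_sub_distrib,
      hsym (fun i => cvar ρ (A i)), hcovsum]
    ring
  have hPC : ∑ i : Fin N, ∑ j ∈ Ioi i, cvar ρ (A i + A j)
      = ((N : ℂ) - 2) * ∑ i, cvar ρ (A i) + cvar ρ (∑ i, A i) := by
    have : ∀ i j : Fin N, cvar ρ (A i + A j)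
        = cvar ρ (A i) + cvar ρ (A j) + ccov ρ (A i) (A j) := fun i j => cvar_add ρ _ _
    simp only [this]
    rw [Finset.sum_congr rfl (fun i _ => Finset.sum_add_distrib), Finset.sum_add_distrib,
      hsym (fun i => cvar ρ (A i)), hcovsum]
    ring
  -- real versions via re
  have hDre : D = (N : ℝ) * S - V := by
    have := congrArg Complex.re hDC
    simpa [hD, hS, hV, qvar_eq_re, Complex.re_sum, Complex.sub_re, Complex.mul_re] using this
  have hPre : P = ((N : ℝ) - 2) * S + V := by
    have := congrArg Complex.re hPC
    simpa [hP, hS, hV, qvar_eq_re, Complex.re_sum, Complex.add_re, Complex.mul_re] using this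
  -- nonnegativity of P and qdev squares
  have hvar_nn : ∀ i j : Fin N, 0 ≤ qvar ρ (A i + A j) :=
    fun i j => qvar_nonneg hρ hρ1 ((hA i).add (hA j))
  have hP0 : 0 ≤ P := by
    refine Finset.sum_nonneg fun i _ => Finset.sum_nonneg fun j _ => hvar_nn i j
  have hdev_sq : ∀ i j : Fin N, qdev ρ (A i + A j) ^ 2 = qvar ρ (A i + A j) :=
    fun i j => Real.sq_sqrt (hvar_nn i j)
  -- Cauchy–Schwarz over the set of pairs
  set s : Finset ((_ : Fin N) × Fin N) := (univ : Finset (Fin N)).sigma (fun i => Ioi i)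
    with hs
  have hTsig : T = ∑ p ∈ s, qdev ρ (A p.1 + A p.2) := by
    rw [hs, Finset.sum_sigma]
  have hPsig : P = ∑ p ∈ s, qdev ρ (A p.1 + A p.2) ^ 2 := by
    rw [hs, Finset.sum_sigma]
    exact Finset.sum_congr rfl fun i _ => Finset.sum_congr rfl fun j _ =>
      (hdev_sq i j).symm
  have hCS : T ^ 2 ≤ (s.card : ℝ) * P := by
    rw [hTsig, hPsig]
    exact sq_sum_le_card_mul_sum_sq
  -- the number of pairs
  have hcard : 2 * (s.card : ℝ) = (N : ℝ) * ((N : ℝ) - 1) := by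
    have key := Finset.sum_sum_Ioi_add_eq_sum_sum_off_diag (fun _ _ : Fin N => (1 : ℝ))
    simp only [Finset.sum_const, nsmul_eq_mul, mul_one, Finset.card_compl,
      Finset.card_singleton, Finset.card_univ, Fintype.card_fin] at key
    -- key : ∑ i, (Ioi i).card * (1+1) = ∑ i, (N - 1 : ℕ)
    rw [hs, Finset.card_sigma]
    push_cast
    have hN1 : ((N - 1 : ℕ) : ℝ) = (N : ℝ) - 1 := by
      have : (1:ℕ) ≤ N := le_trans one_le_two hN
      push_cast [this]
      ring
    rw [hN1] at key
    rw [← key, Finset.mul_sum]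
    exact Finset.sum_congr rfl fun i _ => by ring
  have hnn : 0 < (N : ℝ) * ((N : ℝ) - 1) := by nlinarith
  have hK : 0 < α * (N : ℝ) + ((N : ℝ) - 2) * β := by nlinarith
  -- main estimate
  have h1 : (2 * β / ((N : ℝ) * ((N : ℝ) - 1))) * T ^ 2 ≤ β * P := by
    have hcoef : 0 ≤ 2 * β / ((N : ℝ) * ((N : ℝ) - 1)) := by positivity
    calc (2 * β / ((N : ℝ) * ((N : ℝ) - 1))) * T ^ 2
        ≤ (2 * β / ((N : ℝ) * ((N : ℝ) - 1))) * ((s.card : ℝ) * P) :=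
          mul_le_mul_of_nonneg_left hCS hcoef
      _ = β * P := by
          rw [div_mul_eq_mul_div, div_eq_iff (ne_of_gt hnn), ← hcard]
          ring
  have h2 : β * P + α * D + (α - β) * V = (α * (N : ℝ) + ((N : ℝ) - 2) * β) * S := by
    rw [hDre, hPre]; ring
  have hstep : (2 * β / ((N : ℝ) * ((N : ℝ) - 1))) * T ^ 2 + α * D + (α - β) * V
      ≤ (α * (N : ℝ) + ((N : ℝ) - 2) * β) * S := by linarith
  rw [ge_iff_le, one_div, inv_mul_le_iff₀ hK]
  exact hstep
end
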